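/- Let n ≥ 2 and let P be a partial n-Metric on a set X. For all tuples (x_1,…,x_n), (y_1,…,y_n) ∈ X^n and every t ∈ {1,…,n}: P(x_1,…,x_n) ≤ P(y_1,…,y_t, x_{t+1},…,x_n) + Σ_{j=1}^{t} [P(y_j,…,y_j, x_j) − P(y_j,…,y_j)], where P(y_j,…,y_j,x_j) has n−1 copies of y_j and one x_j, and P(y_j,…,y_j) has n copies of y_j. -/

import Mathlib

/-- The `n`-tuple with `n − 1` copies of `a` and `b` in the last coordinate. -/
def repl {X : Type*} {n : ℕ} (a b : X) : Fin n → X :=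
  fun i => if i.val = n - 1 then b else a

/-- `P` is a partial n-𝔐etric on `X` (for `2 ≤ n`). -/
def IsPartialNMetric {X : Type*} {n : ℕ} (hn : 2 ≤ n) (P : (Fin n → X) → ℝ) : Prop :=
  (∀ x₁ x₂ : X, P (fun _ => x₁) ≤ P (repl x₁ x₂)) ∧
  (∀ (x : Fin n → X) (σ : Equiv.Perm (Fin n)), P (x ∘ σ) = P x) ∧
  (∀ x₁ x₂ : X,
    (P (repl x₁ x₂) = P (fun _ => x₁) ∧ P (repl x₂ x₁) = P (fun _ => x₂)) ↔ x₁ = x₂) ∧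
  (∀ (x : Fin n → X) (a : X),
    P x ≤ P (Function.update x ⟨n - 1, by omega⟩ a) + P (repl a (x ⟨n - 1, by omega⟩))
      - P (fun _ => a))

lemma key_update {X : Type*} {n : ℕ} (hn : 2 ≤ n) (P : (Fin n → X) → ℝ)
    (hP : IsPartialNMetric hn P) (x : Fin n → X) (k : Fin n) (b : X) :
    P x ≤ P (Function.update x k b) + P (repl b (x k)) - P (fun _ => b) := by
  obtain ⟨_, hsym, _, hinq⟩ := hP
  set last : Fin n := ⟨n - 1, by omega⟩ with hlast
  have hswap : P (x ∘ Equiv.swap k last) = P x := hsym x _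
  have h := hinq (x ∘ Equiv.swap k last) b
  have h1 : (x ∘ Equiv.swap k last) last = x k := by
    simp [Equiv.swap_apply_right]
  have h2 : Function.update (x ∘ Equiv.swap k last) last b
      = (Function.update x k b) ∘ Equiv.swap k last := by
    rw [Function.update_comp_equiv]
    congr 1
    rw [Equiv.symm_swap, Equiv.swap_apply_left]
  rw [hswap, h1, h2] at h
  have h3 : P (Function.update x k b ∘ ⇑(Equiv.swap k last)) = P (Function.update x k b) :=
    hsym _ _
  linarith [h]

/-- Term replacement for partial n-𝔐etrics. -/
theorem partialNMetric_term_replacement {X : Type*} {n : ℕ} (hn : 2 ≤ n)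
    (P : (Fin n → X) → ℝ) (hP : IsPartialNMetric hn P)
    (x y : Fin n → X) (t : ℕ) (ht1 : 1 ≤ t) (ht2 : t ≤ n) :
    P x ≤ P (fun i => if i.val < t then y i else x i) +
      ∑ j ∈ Finset.univ.filter (fun j : Fin n => j.val < t),
        (P (repl (y j) (x j)) - P (fun _ => y j)) := by
  clear ht1
  induction t with
  | zero =>
    simp only [Nat.not_lt_zero, if_false, Finset.filter_false]
    simp
  | succ t ih =>
    have ht : t < n := ht2
    have ihh := ih (le_of_lt ht)
    set k : Fin n := ⟨t, ht⟩ with hk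
    have hfil : Finset.univ.filter (fun j : Fin n => j.val < t + 1)
        = insert k (Finset.univ.filter (fun j : Fin n => j.val < t)) := by
      ext j
      simp only [Finset.mem_filter, Finset.mem_univ, true_and, Finset.mem_insert, Fin.ext_iff, hk]
      omega
    have hnot : k ∉ Finset.univ.filter (fun j : Fin n => j.val < t) := by simp [hk]
    rw [hfil, Finset.sum_insert hnot]
    have hupd : (fun i : Fin n => if i.val < t + 1 then y i else x i)
        = Function.update (fun i : Fin n => if i.val < t then y i else x i) k (y k) := by
      funext i
      by_cases hi : i = k
      · subst hi; simp [Function.update_self, hk]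
      · rw [Function.update_of_ne hi]
        have : i.val ≠ t := fun hc => hi (Fin.ext hc)
        by_cases h' : i.val < t
        · simp [h', Nat.lt_succ_of_lt h']
        · have : ¬ i.val < t + 1 := by omega
          simp [h', this]
    have hkey := key_update hn P hP (fun i : Fin n => if i.val < t then y i else x i) k (y k)
    have hxk : ¬ (k : ℕ) < t := by simp [hk]
    rw [if_neg hxk, ← hupd] at hkey
    linarith
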